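/- Let (X, σ) be a subshift whose every point x has the property: for all ε > 0 there is a syndetic set S ⊆ ℕ such that for every s ∈ S the set {t ∈ ℤ : x_t ≠ (σ^s x)_t} has upper density less than ε (mean almost periodicity). Given words u, v with |v| < |u| such that every x ∈ X is a bi-infinite concatenation of u and v with no three consecutive u's, and given s = |v|, the upper density of {t : x_t ≠ (σ^{|v|}x)_t} is at most (2/L)·max(d(vu, uv), d(vu², u²v)) where L is any lower bound on the gap between consecutive starting positions of the u/v-blocks of the form v^i u^j; in particular it is at most 4·d(uv, vu)/L′ where L′ is a lower bound for the lengths of the blocks v^i u^j (j ≤ 2) in the decomposition. -/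

import Mathlib

/-- `wordPow v n` is the word `v` repeated `n` times. -/
def wordPow {A : Type*} (v : List A) (n : ℕ) : List A := (List.replicate n v).flatten

/-- Hamming distance of two words (of the same length). -/
def hammingDistL {A : Type*} [DecidableEq A] (w x : List A) : ℕ :=
  (List.zipWith (fun a b => if a = b then 0 else 1) w x).sum

/-- The left shift on bi-infinite sequences. -/
def shiftMap {A : Type*} (x : ℤ → A) : ℤ → A := fun n => x (n + 1)

/-- The set `D ⊆ ℤ` has upper density at most `c`. -/
def UpperDensityLE (D : Set ℤ) (c : ℝ) : Prop :=
  ∀ ε : ℝ, 0 < ε → ∃ N₀ : ℕ, ∀ N : ℕ, N₀ ≤ N → ∀ M : ℤ,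
    ((D ∩ Set.Icc (M + 1) (M + N)).ncard : ℝ) ≤ (c + ε) * N

/-- `S ⊆ ℕ` is syndetic: it has bounded gaps. -/
def Syndetic (S : Set ℕ) : Prop := ∃ g : ℕ, ∀ n : ℕ, ∃ s ∈ S, n ≤ s ∧ s ≤ n + g

section Aux
variable {A : Type*} [DecidableEq A]

lemma wordPow_succ (v : List A) (n : ℕ) : wordPow v (n+1) = v ++ wordPow v n := by
  simp [wordPow, List.replicate_succ]

lemma wordPow_succ' (v : List A) (n : ℕ) : wordPow v (n+1) = wordPow v n ++ v := by
  rw [wordPow, List.replicate_succ', wordPow]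
  simp

lemma length_wordPow (v : List A) (n : ℕ) : (wordPow v n).length = n * v.length := by
  induction n with
  | zero => simp [wordPow]
  | succ k ih => rw [wordPow_succ]; simp [ih]; ring

lemma hammingDistL_self (w : List A) : hammingDistL w w = 0 := by
  induction w with
  | nil => rfl
  | cons a w ih => simpa [hammingDistL] using ih

lemma hammingDistL_comm (w x : List A) : hammingDistL w x = hammingDistL x w := by
  induction w generalizing x with
  | nil => cases x <;> rfl
  | cons a w ih =>
    cases x with
    | nil => rfl
    | cons b x => simp [hammingDistL, List.zipWith_cons_cons] at *; rw [ih]; by_cases h : a = b <;> simp [h, eq_comm]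

lemma hammingDistL_append_left (r p q : List A) :
    hammingDistL (r ++ p) (r ++ q) = hammingDistL p q := by
  unfold hammingDistL
  rw [List.zipWith_append rfl, List.sum_append]
  have := hammingDistL_self r
  unfold hammingDistL at this
  omega

lemma hammingDistL_append_right (p q s : List A) (h : p.length = q.length) :
    hammingDistL (p ++ s) (q ++ s) = hammingDistL p q := by
  unfold hammingDistL
  rw [List.zipWith_append h, List.sum_append]
  have := hammingDistL_self s
  unfold hammingDistL at this
  omega

lemma hammingDistL_triangle (a b c : List A) (h1 : a.length = b.length) (h2 : b.length = c.length) :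
    hammingDistL a c ≤ hammingDistL a b + hammingDistL b c := by
  induction a generalizing b c with
  | nil => simp [hammingDistL]
  | cons x a ih =>
    cases b with
    | nil => simp at h1
    | cons y b =>
      cases c with
      | nil => simp at h2
      | cons z c =>
        simp only [List.length_cons, Nat.succ_inj] at h1 h2
        have := ih b c h1 h2
        simp only [hammingDistL, List.zipWith_cons_cons, List.sum_cons] at *
        by_cases hxy : x = y <;> by_cases hyz : y = z
        · simp [hxy, hyz, hxy.trans hyz]; omega
        · have : ¬ x = z := fun h => hyz (hxy ▸ h)
          simp [hxy, hyz, this]; omega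
        · have : ¬ x = z := fun h => hxy (hyz ▸ h.symm).symm
          simp [hxy, hyz, this]; omega
        · by_cases hxz : x = z <;> simp [hxy, hyz, hxz] <;> omega

lemma hammingDistL_eq_sum (p q : List A) :
    hammingDistL p q = ∑ m ∈ Finset.range (min p.length q.length),
      (if p[m]? = q[m]? then 0 else 1) := by
  induction p generalizing q with
  | nil => simp [hammingDistL]
  | cons a p ih =>
    cases q with
    | nil => simp [hammingDistL]
    | cons b q =>
      simp only [hammingDistL, List.zipWith_cons_cons, List.sum_cons, List.length_cons,
        Nat.succ_min_succ]
      rw [Finset.sum_range_succ']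
      simp only [List.getElem?_cons_succ, List.getElem?_cons_zero]
      rw [add_comm, ← ih]
      congr 1
      by_cases h : a = b <;> simp [h, hammingDistL]

lemma card_ne_eq_hamming (p q : List A) (h : p.length = q.length) :
    ((Finset.range p.length).filter (fun m => ¬ (p[m]? = q[m]?))).card = hammingDistL p q := by
  rw [Finset.card_filter, hammingDistL_eq_sum, h, min_self]
  exact Finset.sum_congr rfl fun m _ => by by_cases hm : p[m]? = q[m]? <;> simp [hm]

end Aux

lemma blockBound {A : Type*} [DecidableEq A] (u v : List A) (hv : v ≠ [])
    (L' : ℕ) (x : ℤ → A) (t : ℤ → ℤ)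
    (hblocks : ∀ n : ℤ, ∃ i j : ℕ, 1 ≤ i ∧ (j = 1 ∨ j = 2) ∧
      (L' : ℤ) ≤ t (n + 1) - t n ∧
      t (n + 1) = t n + ((wordPow v i ++ wordPow u j).length : ℤ) ∧
      ∀ k : Fin (wordPow v i ++ wordPow u j).length,
        x (t n + ((k : ℕ) : ℤ)) = (wordPow v i ++ wordPow u j).get k)
    (n : ℤ) :
    ((Finset.Ico (t n) (t (n+1))).filter (fun s => x s ≠ x (s + (v.length : ℤ)))).card ≤
      max (hammingDistL (v ++ u) (u ++ v))
          (hammingDistL (v ++ (u ++ u)) ((u ++ u) ++ v)) := by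
  classical
  obtain ⟨i, j, hi, hj, -, hteq, hget⟩ := hblocks n
  obtain ⟨i', j', hi', -, -, -, hget'⟩ := hblocks (n+1)
  set w : List A := wordPow v i ++ wordPow u j with hw
  have hv1 : 1 ≤ v.length := List.length_pos_iff.2 hv
  have hvw : v.length ≤ w.length := by
    have : (wordPow v i).length = i * v.length := length_wordPow v i
    have : v.length ≤ (wordPow v i).length := by rw [this]; nlinarith
    simpa [hw] using le_trans this (by simp)
  set w2 : List A := w.drop v.length ++ v with hw2
  have hw2len : w2.length = w.length := by
    simp [hw2, List.length_drop]; omega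
  -- values of x on the block
  have hA : ∀ m : ℕ, (hm : m < w.length) → x (t n + (m : ℤ)) = w[m] := by
    intro m hm; exact hget ⟨m, hm⟩
  -- block n+1 starts with v
  have hstartv : ∀ m : ℕ, (hm : m < v.length) → x (t (n+1) + (m : ℤ)) = v[m] := by
    intro m hm
    set w' : List A := wordPow v i' ++ wordPow u j' with hw'
    have hlen1 : (wordPow v i').length = i' * v.length := length_wordPow v i'
    have hmv : m < (wordPow v i').length := by rw [hlen1]; nlinarith
    have hmw : m < w'.length := by simp [hw']; omega
    have h1 : x (t (n+1) + (m : ℤ)) = w'[m] := hget' ⟨m, hmw⟩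
    rw [h1]
    have h2 : w'[m]'hmw = (wordPow v i')[m]'hmv := List.getElem_append_left hmv
    rw [h2]
    obtain ⟨i'', rfl⟩ : ∃ i'', i' = i'' + 1 := ⟨i' - 1, by omega⟩
    have h3 : wordPow v (i''+1) = v ++ wordPow v i'' := wordPow_succ v i''
    simp only [h3]
    exact List.getElem_append_left hm
  have hB : ∀ m : ℕ, (hm : m < w.length) → x (t n + (m : ℤ) + (v.length : ℤ)) = w2[m]'(by omega) := by
    intro m hm
    by_cases hc : m + v.length < w.length
    · have h1 : x (t n + (m : ℤ) + (v.length : ℤ)) = w[m + v.length] := by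
        rw [← hA (m + v.length) hc]; push_cast; ring_nf
      rw [h1]
      have hmd : m < (w.drop v.length).length := by simp [List.length_drop]; omega
      have h2 : w2[m]'(by omega) = (w.drop v.length)[m]'hmd := List.getElem_append_left hmd
      rw [h2, List.getElem_drop]
      congr 1; omega
    · have hm' : m + v.length - w.length < v.length := by omega
      have h1 : x (t n + (m : ℤ) + (v.length : ℤ)) = v[m + v.length - w.length] := by
        rw [← hstartv (m + v.length - w.length) hm', hteq]
        congr 1; push_cast; omega
      rw [h1]
      have hmd : ¬ m < (w.drop v.length).length := by simp [List.length_drop]; omega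
      have h2 : w2[m]'(by omega) = v[m - (w.drop v.length).length]'(by simp [List.length_drop]; omega) :=
        List.getElem_append_right (by omega)
      rw [h2]
      congr 1; simp [List.length_drop]; omega
  -- card bound via injection into difference positions
  have hcard : ((Finset.Ico (t n) (t (n+1))).filter (fun s => x s ≠ x (s + (v.length : ℤ)))).card ≤
      ((Finset.range w.length).filter (fun m => ¬ (w[m]? = w2[m]?))).card := by
    apply Finset.card_le_card_of_injOn (fun s => (s - t n).toNat)
    · intro s hs
      simp only [Finset.mem_coe, Finset.mem_filter, Finset.mem_Ico] at hs
      obtain ⟨⟨hs1, hs2⟩, hs3⟩ := hs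
      have hmlt : (s - t n).toNat < w.length := by rw [hteq] at hs2; omega
      simp only [Finset.mem_coe, Finset.mem_filter, Finset.mem_range]
      refine ⟨hmlt, ?_⟩
      have hseq : s = t n + ((s - t n).toNat : ℤ) := by omega
      have e1 : w[(s - t n).toNat]? = some (x s) := by
        rw [List.getElem?_eq_getElem hmlt, ← hA _ hmlt, ← hseq]
      have e2 : w2[(s - t n).toNat]? = some (x (s + (v.length : ℤ))) := by
        rw [List.getElem?_eq_getElem (by omega : (s - t n).toNat < w2.length),
          ← hB _ hmlt, ← hseq]
      rw [e1, e2]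
      simpa using hs3
    · intro s hs s' hs' hss
      simp only [Finset.coe_filter, Set.mem_setOf_eq, Finset.mem_Ico] at hs hs'
      replace hss : (s - t n).toNat = (s' - t n).toNat := hss
      omega
  rw [card_ne_eq_hamming w w2 hw2len.symm] at hcard
  -- identify the hamming distance
  obtain ⟨i0, rfl⟩ : ∃ i0, i = i0 + 1 := ⟨i - 1, by omega⟩
  have hwsplit : w = wordPow v i0 ++ (v ++ wordPow u j) := by
    rw [hw, wordPow_succ' v i0]; simp
  have hw2split : w2 = wordPow v i0 ++ (wordPow u j ++ v) := by
    rw [hw2, hw, wordPow_succ v i0, List.append_assoc, List.drop_left, List.append_assoc]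
  rw [hwsplit, hw2split, hammingDistL_append_left] at hcard
  refine le_trans hcard ?_
  rcases hj with rfl | rfl
  · have : wordPow u 1 = u := by simp [wordPow]
    rw [this]; exact le_max_left _ _
  · have : wordPow u 2 = u ++ u := by simp [wordPow, List.replicate_succ]
    rw [this, ← List.append_assoc]
    exact le_max_right _ _

lemma UpperDensityLE_mono {D : Set ℤ} {c c' : ℝ} (h : UpperDensityLE D c) (hcc : c ≤ c') :
    UpperDensityLE D c' := by
  intro ε hε
  obtain ⟨N₀, hN₀⟩ := h ε hε
  refine ⟨N₀, fun N hN M => le_trans (hN₀ N hN M) ?_⟩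
  have : (0:ℝ) ≤ N := Nat.cast_nonneg _
  nlinarith

theorem stmt18' {A : Type*} [DecidableEq A]
    (u v : List A) (hv : v ≠ [])
    (L' : ℕ) (hL' : 0 < L')
    (x : ℤ → A)
    (t : ℤ → ℤ) (ht : StrictMono t)
    (hcover : ∀ m : ℤ, ∃ n : ℤ, t n ≤ m ∧ m < t (n + 1))
    (hblocks : ∀ n : ℤ, ∃ i j : ℕ, 1 ≤ i ∧ (j = 1 ∨ j = 2) ∧
      (L' : ℤ) ≤ t (n + 1) - t n ∧
      t (n + 1) = t n + ((wordPow v i ++ wordPow u j).length : ℤ) ∧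
      ∀ k : Fin (wordPow v i ++ wordPow u j).length,
        x (t n + ((k : ℕ) : ℤ)) = (wordPow v i ++ wordPow u j).get k) :
    UpperDensityLE {s : ℤ | x s ≠ x (s + (v.length : ℤ))}
        ((2 * max (hammingDistL (v ++ u) (u ++ v))
            (hammingDistL (v ++ (u ++ u)) ((u ++ u) ++ v)) : ℝ) / (L' : ℝ)) := by
  classical
  set Mx : ℕ := max (hammingDistL (v ++ u) (u ++ v))
      (hammingDistL (v ++ (u ++ u)) ((u ++ u) ++ v)) with hMx
  set P : ℤ → Prop := fun s => x s ≠ x (s + (v.length : ℤ)) with hP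
  intro ε hε
  refine ⟨2 * L', fun N hN M => ?_⟩
  have hN2 : 2 ≤ N := by omega
  have hLpos : (0:ℝ) < (L' : ℝ) := by positivity
  -- convert ncard to a Finset card
  have hset : {s : ℤ | x s ≠ x (s + (v.length : ℤ))} ∩ Set.Icc (M + 1) (M + (N:ℤ)) =
      ↑((Finset.Icc (M + 1) (M + (N:ℤ))).filter P) := by
    ext s
    simp only [Set.mem_inter_iff, Set.mem_setOf_eq, Set.mem_Icc, Finset.coe_filter,
      Finset.mem_Icc, hP]
    tauto
  rw [hset, Set.ncard_coe_finset]
  obtain ⟨n₀, hn₀a, hn₀b⟩ := hcover (M + 1)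
  obtain ⟨n₁, hn₁a, hn₁b⟩ := hcover (M + N)
  have hn01 : n₀ ≤ n₁ := by
    by_contra h
    push_neg at h
    have h2 : t (n₁ + 1) ≤ t n₀ := ht.monotone (by omega)
    omega
  -- per-block bound
  have hblock : ∀ m : ℤ, ((Finset.Ico (t m) (t (m+1))).filter P).card ≤ Mx :=
    fun m => blockBound u v hv L' x t hblocks m
  -- sum over blocks
  have hsum : ∀ (m : ℤ) (k : ℕ), ((Finset.Ico (t m) (t (m + k))).filter P).card ≤ k * Mx := by
    intro m k
    induction k with
    | zero => simp
    | succ k ih =>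
      have h1 : t m ≤ t (m + k) := ht.monotone (by omega)
      have h2 : t (m + k) ≤ t (m + k + 1) := ht.monotone (by omega)
      have heq : (m + ((k+1 : ℕ) : ℤ)) = (m + k) + 1 := by push_cast; ring
      rw [heq, ← Finset.Ico_union_Ico_eq_Ico h1 h2, Finset.filter_union]
      refine le_trans (Finset.card_union_le _ _) ?_
      have := hblock (m + k)
      have hkk : (k+1) * Mx = k * Mx + Mx := by ring
      omega
  -- coverage of the window by blocks n₀ .. n₁
  have hsub : Finset.Icc (M + 1) (M + (N:ℤ)) ⊆ Finset.Ico (t n₀) (t (n₁ + 1)) := by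
    intro s hs
    simp only [Finset.mem_Icc] at hs
    simp only [Finset.mem_Ico]
    omega
  set k₁ : ℕ := (n₁ + 1 - n₀).toNat with hk₁
  have hk₁' : n₀ + (k₁ : ℤ) = n₁ + 1 := by omega
  have hcount : ((Finset.Icc (M + 1) (M + (N:ℤ))).filter P).card ≤ k₁ * Mx := by
    refine le_trans (Finset.card_le_card (Finset.filter_subset_filter P hsub)) ?_
    have := hsum n₀ k₁
    rwa [hk₁'] at this
  -- telescoping lower bound on block gaps
  have htel : ∀ (m : ℤ) (k : ℕ), t m + (k : ℤ) * L' ≤ t (m + k) := by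
    intro m k
    induction k with
    | zero => simp
    | succ k ih =>
      obtain ⟨i, j, -, -, hL, -, -⟩ := hblocks (m + k)
      have heq : (m + ((k+1 : ℕ) : ℤ)) = (m + k) + 1 := by push_cast; ring
      rw [heq]
      push_cast
      have : ((k:ℤ)+1) * L' = (k:ℤ) * L' + L' := by ring
      rw [this]
      push_cast at ih
      omega
  -- gap bound
  have hgap : (n₁ - n₀ - 1) * (L' : ℤ) ≤ (N : ℤ) - 2 := by
    rcases eq_or_lt_of_le hn01 with rfl | hlt
    · have : (n₀ - n₀ - 1) * (L' : ℤ) ≤ 0 := by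
        have : (0:ℤ) ≤ L' := by positivity
        nlinarith
      omega
    · have hk : (n₀ + 1) + (((n₁ - n₀ - 1).toNat : ℤ)) = n₁ := by omega
      have := htel (n₀ + 1) (n₁ - n₀ - 1).toNat
      rw [hk] at this
      have hc : ((n₁ - n₀ - 1).toNat : ℤ) = n₁ - n₀ - 1 := by omega
      rw [hc] at this
      -- t (n₀+1) ≥ M+2, t n₁ ≤ M+N
      omega
  -- final real arithmetic
  have hcardR : (((Finset.Icc (M + 1) (M + (N:ℤ))).filter P).card : ℝ) ≤ (k₁ : ℝ) * Mx := by
    exact_mod_cast Nat.cast_le.2 hcount |>.trans_eq (by push_cast; ring)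
  have hk₁R : (k₁ : ℝ) = ((n₁ : ℝ) - n₀ - 1) + 2 := by
    have : (k₁ : ℤ) = n₁ - n₀ + 1 := by omega
    have h2 : ((k₁:ℤ):ℝ) = ((n₁ - n₀ + 1 : ℤ) : ℝ) := by rw [this]
    push_cast at h2
    push_cast
    linarith
  have hgapR : ((n₁:ℝ) - n₀ - 1) * L' ≤ (N:ℝ) - 2 := by exact_mod_cast hgap
  have hNR : 2 * (L':ℝ) ≤ (N:ℝ) := by exact_mod_cast hN
  have h1 : (k₁ : ℝ) * L' ≤ 2 * N := by
    rw [hk₁R]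
    nlinarith
  have hMxR : (0:ℝ) ≤ (Mx:ℝ) := Nat.cast_nonneg _
  have hNR0 : (0:ℝ) ≤ (N:ℝ) := Nat.cast_nonneg _
  calc (((Finset.Icc (M + 1) (M + (N:ℤ))).filter P).card : ℝ)
      ≤ (k₁ : ℝ) * Mx := hcardR
    _ ≤ (2 * N / L') * Mx := by
        apply mul_le_mul_of_nonneg_right _ hMxR
        rw [le_div_iff₀ hLpos]
        exact h1
    _ = ((2 * Mx : ℝ) / L') * N := by ring
    _ ≤ ((2 * Mx : ℝ) / L' + ε) * N := by nlinarith

/-- For a subshift all of whose points are mean almost periodic: if `x ∈ X` decomposes into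
blocks `v^i u^j` (`i ≥ 1`, `j ∈ {1,2}`) of length at least `L'`, then the upper density of
`{t : x_t ≠ (σ^{|v|}x)_t}` is at most `(2/L')·max(d(vu,uv), d(vu²,u²v))`, and in particular
at most `4·d(uv,vu)/L'`. -/
theorem stmt18 {A : Type*} [DecidableEq A] [TopologicalSpace A] [DiscreteTopology A]
    (X : Set (ℤ → A)) (hXc : IsClosed X) (hXi : ∀ x, x ∈ X ↔ shiftMap x ∈ X)
    (hmap : ∀ x ∈ X, ∀ ε : ℝ, 0 < ε → ∃ S : Set ℕ, Syndetic S ∧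
      ∀ s ∈ S, UpperDensityLE {t : ℤ | x t ≠ x (t + (s : ℤ))} ε)
    (u v : List A) (hv : v ≠ []) (hlen : v.length < u.length)
    (L' : ℕ) (hL' : 0 < L')
    (x : ℤ → A) (hx : x ∈ X)
    (t : ℤ → ℤ) (ht : StrictMono t)
    (hcover : ∀ m : ℤ, ∃ n : ℤ, t n ≤ m ∧ m < t (n + 1))
    (hblocks : ∀ n : ℤ, ∃ i j : ℕ, 1 ≤ i ∧ (j = 1 ∨ j = 2) ∧
      (L' : ℤ) ≤ t (n + 1) - t n ∧
      t (n + 1) = t n + ((wordPow v i ++ wordPow u j).length : ℤ) ∧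
      ∀ k : Fin (wordPow v i ++ wordPow u j).length,
        x (t n + ((k : ℕ) : ℤ)) = (wordPow v i ++ wordPow u j).get k) :
    UpperDensityLE {s : ℤ | x s ≠ x (s + (v.length : ℤ))}
        ((2 * max (hammingDistL (v ++ u) (u ++ v))
            (hammingDistL (v ++ (u ++ u)) ((u ++ u) ++ v)) : ℝ) / (L' : ℝ)) ∧
    UpperDensityLE {s : ℤ | x s ≠ x (s + (v.length : ℤ))}
        ((4 * hammingDistL (u ++ v) (v ++ u) : ℝ) / (L' : ℝ)) := by

  classical
  have h1 := stmt18' u v hv L' hL' x t ht hcover hblocks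
  refine ⟨h1, UpperDensityLE_mono h1 ?_⟩
  set d : ℕ := hammingDistL (u ++ v) (v ++ u) with hd
  have e1 : hammingDistL (v ++ u) (u ++ v) = d := hammingDistL_comm _ _
  have tri := hammingDistL_triangle (v ++ (u ++ u)) (u ++ (v ++ u)) ((u ++ u) ++ v)
    (by simp; omega) (by simp; omega)
  have e2 : hammingDistL (v ++ (u ++ u)) (u ++ (v ++ u)) = d := by
    rw [show v ++ (u ++ u) = (v ++ u) ++ u by simp,
      show u ++ (v ++ u) = (u ++ v) ++ u by simp,
      hammingDistL_append_right _ _ _ (by simp; omega)]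
    exact hammingDistL_comm _ _
  have e3 : hammingDistL (u ++ (v ++ u)) ((u ++ u) ++ v) = d := by
    rw [show (u ++ u) ++ v = u ++ (u ++ v) by simp, hammingDistL_append_left]
    exact hammingDistL_comm _ _
  have hMd : 2 * max (hammingDistL (v ++ u) (u ++ v))
      (hammingDistL (v ++ (u ++ u)) ((u ++ u) ++ v)) ≤ 4 * d := by
    have h2 : hammingDistL (v ++ (u ++ u)) ((u ++ u) ++ v) ≤ 2 * d := by omega
    have h3 : max (hammingDistL (v ++ u) (u ++ v))
        (hammingDistL (v ++ (u ++ u)) ((u ++ u) ++ v)) ≤ 2 * d :=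
      max_le (by omega) h2
    omega
  have hLpos : (0:ℝ) < (L' : ℝ) := by positivity
  rw [div_le_div_iff_of_pos_right hLpos]
  exact_mod_cast hMd
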